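/- Let d ≥ 1, Nα ≥ 2, Nβ ≥ 1, N = Nα + Nβ. Let ρ_1,…,ρ_{Nα} be Borel probability measures on ℝ^d with finite first moments, let ŷ_1,…,ŷ_{Nβ} ∈ ℝ^d, and set ρ_{Nα+j} := δ_{ŷ_j} for j = 1,…,Nβ. Assume that for some i ∈ {2,…,Nα} the measure ρ_i is not a Dirac mass. Then the product measure γ := ρ_1 ⊗ ρ_2 ⊗ … ⊗ ρ_N is a minimizer of ∫ c dγ over Π(ρ_1,…,ρ_N), and γ is not induced by a map: there exists no Borel map T : ℝ^d → (ℝ^d)^{N−1} such that γ = (Id, T)_# ρ_1. In particular, the Kantorovich problem admits an optimal plan that is not a Monge solution. -/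

import Mathlib

open MeasureTheory RealInnerProductSpace

noncomputable section

/-- The "starred" vector `y* = (-2 y¹, y², …, y^d)`. -/
def ystar {d : ℕ} (hd : 0 < d) (y : EuclideanSpace ℝ (Fin d)) : EuclideanSpace ℝ (Fin d) :=
  y - (3 * y ⟨0, hd⟩) • EuclideanSpace.single (⟨0, hd⟩ : Fin d) (1 : ℝ)

/-- The cost `c(x_1,…,x_Nα,y_1,…,y_Nβ) = ∑_i ∑_j x_i · y_j*` on `(ℝ^d)^(Nα+Nβ)`. -/
def cost {d : ℕ} (hd : 0 < d) (Nα Nβ : ℕ)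
    (z : Fin (Nα + Nβ) → EuclideanSpace ℝ (Fin d)) : ℝ :=
  ∑ i : Fin Nα, ∑ j : Fin Nβ, ⟪z (Fin.castAdd Nβ i), ystar hd (z (Fin.natAdd Nα j))⟫

/-- marginals of a product of probability measures -/
lemma map_eval_pi' {ι : Type*} [Fintype ι] {α : ι → Type*} [∀ i, MeasurableSpace (α i)]
    (μ : ∀ i, Measure (α i)) [∀ i, IsProbabilityMeasure (μ i)] (i : ι) :
    Measure.map (fun z => z i) (Measure.pi μ) = μ i := by
  classical
  refine Measure.ext fun s hs => ?_
  rw [Measure.map_apply (measurable_pi_apply i) hs]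
  have h1 : (fun z : ∀ j, α j => z i) ⁻¹' s
      = Set.pi Set.univ (Function.update (fun _ => Set.univ) i s) := Set.eval_preimage
  rw [h1, Measure.pi_pi]
  rw [Finset.prod_eq_single i
    (fun b _ hb => by rw [Function.update_of_ne hb]; exact measure_univ)
    (fun h => absurd (Finset.mem_univ i) h), Function.update_self]

/-- a 0-1 probability measure on a separable metric space is a Dirac mass -/
lemma zeroOne_dirac {X : Type*} [MetricSpace X] [TopologicalSpace.SeparableSpace X]
    [MeasurableSpace X] [BorelSpace X] (μ : Measure X) [IsProbabilityMeasure μ]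
    (h : ∀ A : Set X, MeasurableSet A → μ A = 0 ∨ μ A = 1) :
    ∃ c, μ = Measure.dirac c := by
  obtain ⟨s, hsc, hsd⟩ := TopologicalSpace.exists_countable_dense X
  have hball : ∀ n : ℕ, ∃ q : X, μ (Metric.ball q (1 / (n + 1))) = 1 := by
    intro n
    by_contra hc
    push_neg at hc
    have h0 : ∀ q ∈ s, μ (Metric.ball q (1 / (n + 1))) = 0 :=
      fun q _ => (h _ Metric.isOpen_ball.measurableSet).resolve_right (hc q)
    have hcup : (⋃ q ∈ s, Metric.ball q (1 / (n + 1))) = Set.univ := by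
      ext x
      simp only [Set.mem_iUnion, Set.mem_univ, iff_true]
      have hx : x ∈ closure s := hsd x
      rcases Metric.mem_closure_iff.1 hx (1 / (n + 1)) (by positivity) with ⟨q, hq, hq2⟩
      exact ⟨q, hq, Metric.mem_ball.2 hq2⟩
    have : μ Set.univ = 0 := by
      rw [← hcup]
      exact (measure_biUnion_null_iff hsc).2 h0
    simp at this
  choose q hq using hball
  set K : Set X := ⋂ n : ℕ, Metric.ball (q n) (1 / (n + 1)) with hK
  have hKc : μ Kᶜ = 0 := by
    rw [hK, Set.compl_iInter]
    exact measure_iUnion_null fun n =>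
      (prob_compl_eq_zero_iff Metric.isOpen_ball.measurableSet).2 (hq n)
  have hKm : μ K = 1 := by
    rw [← prob_compl_eq_zero_iff (MeasurableSet.iInter fun n => Metric.isOpen_ball.measurableSet)]
    exact hKc
  have hKne : K.Nonempty := by
    by_contra hne
    rw [Set.not_nonempty_iff_eq_empty] at hne
    rw [hne] at hKm
    simp at hKm
  obtain ⟨c, hcK⟩ := hKne
  have hsub : K ⊆ {c} := by
    intro b hb
    have hlt : ∀ ε : ℝ, 0 < ε → dist b c < ε := by
      intro ε hε
      obtain ⟨n, hn⟩ := exists_nat_gt (2 / ε)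
      have hn' : (2 : ℝ) / (n + 1) < ε := by
        rw [div_lt_iff₀ (by positivity)]
        have h2 : 2 / ε < (n : ℝ) + 1 := lt_of_lt_of_le hn (by linarith)
        calc (2 : ℝ) = (2 / ε) * ε := by field_simp
          _ < ((n : ℝ) + 1) * ε := mul_lt_mul_of_pos_right h2 hε
          _ = ε * ((n : ℝ) + 1) := mul_comm _ _
      have hb' := Set.mem_iInter.1 hb n
      have hc' := Set.mem_iInter.1 hcK n
      rw [Metric.mem_ball] at hb' hc'
      calc dist b c ≤ dist b (q n) + dist c (q n) := dist_triangle_right _ _ _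
        _ < 1 / (n + 1) + 1 / (n + 1) := add_lt_add hb' hc'
        _ = 2 / (n + 1) := by ring
        _ < ε := hn'
    have : dist b c ≤ 0 := by
      by_contra hpos
      push_neg at hpos
      exact absurd (hlt _ hpos) (lt_irrefl _)
    simpa [Set.mem_singleton_iff] using (dist_le_zero.1 this)
  have hcfull : μ {c} = 1 := by
    have h1 : K = {c} := Set.Subset.antisymm hsub (Set.singleton_subset_iff.2 hcK)
    rw [← h1]; exact hKm
  refine ⟨c, Measure.ext fun A hA => ?_⟩
  rw [Measure.dirac_apply' _ hA]
  by_cases hcA : c ∈ A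
  · rw [Set.indicator_of_mem hcA]
    refine le_antisymm prob_le_one ?_
    calc (1 : ENNReal) = μ {c} := hcfull.symm
      _ ≤ μ A := measure_mono (Set.singleton_subset_iff.2 hcA)
  · rw [Set.indicator_of_notMem hcA]
    refine measure_mono_null (fun x hx => ?_) ((prob_compl_eq_zero_iff (measurableSet_singleton c)).2 hcfull)
    intro hxc
    exact hcA (by rwa [← hxc] : c ∈ A)

theorem stmt_13 {d Nα Nβ : ℕ} (hd : 0 < d) (hNα : 2 ≤ Nα) (hNβ : 0 < Nβ)
    (ρ : Fin (Nα + Nβ) → Measure (EuclideanSpace ℝ (Fin d)))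
    [∀ i, IsProbabilityMeasure (ρ i)]
    (hmom : ∀ i : Fin Nα,
      Integrable (fun x : EuclideanSpace ℝ (Fin d) => ‖x‖) (ρ (Fin.castAdd Nβ i)))
    (yhat : Fin Nβ → EuclideanSpace ℝ (Fin d))
    (hdirac : ∀ j : Fin Nβ, ρ (Fin.natAdd Nα j) = Measure.dirac (yhat j))
    (i₀ : Fin Nα) (hi₀ : i₀ ≠ ⟨0, by omega⟩)
    (hnd : ∀ x : EuclideanSpace ℝ (Fin d), ρ (Fin.castAdd Nβ i₀) ≠ Measure.dirac x) :
    (∀ i, Measure.map (fun z => z i) (Measure.pi ρ) = ρ i) ∧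
    (∀ γ' : Measure (Fin (Nα + Nβ) → EuclideanSpace ℝ (Fin d)),
      IsProbabilityMeasure γ' →
      (∀ i, Measure.map (fun z => z i) γ' = ρ i) →
      ∫ z, cost hd Nα Nβ z ∂(Measure.pi ρ) ≤ ∫ z, cost hd Nα Nβ z ∂γ') ∧
    ¬ ∃ T : EuclideanSpace ℝ (Fin d) → (Fin (Nα + Nβ) → EuclideanSpace ℝ (Fin d)),
        Measurable T ∧ (∀ x, T x ⟨0, by omega⟩ = x) ∧
        Measure.pi ρ = Measure.map T (ρ ⟨0, by omega⟩) := by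
  classical
  have hmarg : ∀ i, Measure.map (fun z => z i) (Measure.pi ρ) = ρ i :=
    fun i => map_eval_pi' ρ i
  refine ⟨hmarg, ?_, ?_⟩
  · -- optimality: in fact the integral is the same for all couplings
    set S : EuclideanSpace ℝ (Fin d) := ∑ j : Fin Nβ, ystar hd (yhat j) with hS
    have hScont : Continuous (fun x : EuclideanSpace ℝ (Fin d) => (⟪x, S⟫ : ℝ)) :=
      continuous_id.inner continuous_const
    have key : ∀ γ' : Measure (Fin (Nα + Nβ) → EuclideanSpace ℝ (Fin d)), IsProbabilityMeasure γ' →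
        (∀ i, Measure.map (fun z => z i) γ' = ρ i) →
        ∫ z, cost hd Nα Nβ z ∂γ'
          = ∑ i : Fin Nα, ∫ x, (⟪x, S⟫ : ℝ) ∂(ρ (Fin.castAdd Nβ i)) := by
      intro γ' h1 h2
      have hIρ : ∀ i : Fin Nα, Integrable (fun x : EuclideanSpace ℝ (Fin d) => (⟪x, S⟫ : ℝ)) (ρ (Fin.castAdd Nβ i)) := by
        intro i
        refine ((hmom i).const_mul ‖S‖).mono hScont.aestronglyMeasurable ?_
        filter_upwards with x
        calc ‖(⟪x, S⟫ : ℝ)‖ ≤ ‖x‖ * ‖S‖ := by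
              rw [Real.norm_eq_abs]; exact abs_real_inner_le_norm x S
          _ = ‖S‖ * ‖x‖ := mul_comm _ _
          _ = ‖‖S‖ * ‖x‖‖ := (Real.norm_of_nonneg (by positivity)).symm
      have hint : ∀ i : Fin Nα,
          Integrable (fun z : Fin (Nα + Nβ) → EuclideanSpace ℝ (Fin d) => (⟪z (Fin.castAdd Nβ i), S⟫ : ℝ)) γ' := by
        intro i
        have hI := hIρ i
        rw [← h2 (Fin.castAdd Nβ i)] at hI
        have := (integrable_map_measure hI.aestronglyMeasurable
          (measurable_pi_apply (Fin.castAdd Nβ i)).aemeasurable).1 hI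
        exact this
      have hae : ∀ᵐ z ∂γ', cost hd Nα Nβ z
          = ∑ i : Fin Nα, (⟪z (Fin.castAdd Nβ i), S⟫ : ℝ) := by
        have hj : ∀ᵐ z ∂γ', ∀ j : Fin Nβ, z (Fin.natAdd Nα j) = yhat j := by
          rw [ae_all_iff]
          intro j
          have hmap := h2 (Fin.natAdd Nα j)
          rw [hdirac j] at hmap
          have : γ' ((fun z : Fin (Nα + Nβ) → EuclideanSpace ℝ (Fin d) => z (Fin.natAdd Nα j)) ⁻¹' {yhat j}ᶜ) = 0 := by
            rw [← Measure.map_apply (measurable_pi_apply _) (measurableSet_singleton _).compl,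
              hmap]
            simp
          exact this
        filter_upwards [hj] with z hz
        unfold cost
        refine Finset.sum_congr rfl fun i _ => ?_
        calc ∑ j : Fin Nβ, (⟪z (Fin.castAdd Nβ i), ystar hd (z (Fin.natAdd Nα j))⟫ : ℝ)
            = ∑ j : Fin Nβ, (⟪z (Fin.castAdd Nβ i), ystar hd (yhat j)⟫ : ℝ) :=
              Finset.sum_congr rfl fun j _ => by rw [hz j]
          _ = ⟪z (Fin.castAdd Nβ i), S⟫ := (inner_sum _ _ _).symm
      rw [integral_congr_ae hae, integral_finset_sum _ fun i _ => hint i]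
      refine Finset.sum_congr rfl fun i _ => ?_
      rw [← h2 (Fin.castAdd Nβ i)]
      rw [integral_map (measurable_pi_apply (Fin.castAdd Nβ i)).aemeasurable
        hScont.aestronglyMeasurable]
    intro γ' h1 h2
    rw [key _ inferInstance hmarg, key γ' h1 h2]
  · -- not induced by a map
    rintro ⟨T, hTm, hT0, hTmap⟩
    set z0 : Fin (Nα + Nβ) := ⟨0, by omega⟩ with hz0
    set i₀' : Fin (Nα + Nβ) := Fin.castAdd Nβ i₀ with hi₀'
    have hne : i₀' ≠ z0 := by
      intro hcon
      apply hi₀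
      have : (i₀ : ℕ) = 0 := by
        have := congrArg Fin.val hcon
        simpa [hi₀', hz0] using this
      exact Fin.ext (by simpa using this)
    set μ := ρ i₀' with hμ
    set g : EuclideanSpace ℝ (Fin d) → EuclideanSpace ℝ (Fin d) := fun x => T x i₀' with hg
    have hgm : Measurable g := (measurable_pi_apply i₀').comp hTm
    have rect : ∀ (B C : Set (EuclideanSpace ℝ (Fin d))), MeasurableSet B → MeasurableSet C →
        ρ z0 B * μ C = ρ z0 (B ∩ g ⁻¹' C) := by
      intro B C hB hC
      set t : Fin (Nα + Nβ) → Set (EuclideanSpace ℝ (Fin d)) :=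
        Function.update (Function.update (fun _ => (Set.univ : Set (EuclideanSpace ℝ (Fin d)))) z0 B) i₀' C with ht
      have hset : ((fun z : Fin (Nα + Nβ) → EuclideanSpace ℝ (Fin d) => z z0) ⁻¹' B
          ∩ (fun z => z i₀') ⁻¹' C) = Set.pi Set.univ t := by
        ext z
        simp only [Set.mem_inter_iff, Set.mem_preimage, Set.mem_pi, Set.mem_univ, true_implies,
          ht, Function.update_apply]
        constructor
        · rintro ⟨h1, h2⟩ k
          by_cases hk1 : k = i₀'
          · simpa [hk1] using h2
          · by_cases hk2 : k = z0
            · rw [if_neg hk1, if_pos hk2, hk2]; exact h1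
            · simp [hk1, hk2]
        · intro hk
          constructor
          · have h0 := hk z0
            rwa [if_neg (Ne.symm hne), if_pos rfl] at h0
          · have h1 := hk i₀'
            rwa [if_pos rfl] at h1
      have hmeas : MeasurableSet ((fun z : Fin (Nα + Nβ) → EuclideanSpace ℝ (Fin d) => z z0) ⁻¹' B
          ∩ (fun z => z i₀') ⁻¹' C) :=
        ((measurable_pi_apply z0) hB).inter ((measurable_pi_apply i₀') hC)
      have lhs1 : Measure.pi ρ ((fun z : Fin (Nα + Nβ) → EuclideanSpace ℝ (Fin d) => z z0) ⁻¹' B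
          ∩ (fun z => z i₀') ⁻¹' C) = ρ z0 B * μ C := by
        rw [hset, Measure.pi_pi]
        have hprod : ∀ k, ρ k (t k)
            = (if k = z0 then ρ z0 B else 1) * (if k = i₀' then μ C else 1) := by
          intro k
          rcases eq_or_ne k i₀' with rfl | hk1
          · rw [ht, Function.update_self]
            simp [hne, hμ]
          · rw [ht, Function.update_of_ne hk1]
            rcases eq_or_ne k z0 with rfl | hk2
            · rw [Function.update_self]
              simp [hk1]
            · rw [Function.update_of_ne hk2]
              simp [hk1, hk2]
        simp_rw [hprod]
        rw [Finset.prod_mul_distrib]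
        simp
      have lhs2 : Measure.pi ρ ((fun z : Fin (Nα + Nβ) → EuclideanSpace ℝ (Fin d) => z z0) ⁻¹' B
          ∩ (fun z => z i₀') ⁻¹' C) = ρ z0 (B ∩ g ⁻¹' C) := by
        rw [hTmap, Measure.map_apply hTm hmeas]
        congr 1
        ext x
        simp only [Set.mem_preimage, Set.mem_inter_iff, hT0 x, hg]
      rw [← lhs1, lhs2]
    have key : ∀ A : Set (EuclideanSpace ℝ (Fin d)), MeasurableSet A → μ A = 0 ∨ μ A = 1 := by
      intro A hA
      have hA' : μ A = ρ z0 (g ⁻¹' A) := by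
        have := rect Set.univ A MeasurableSet.univ hA
        simpa using this
      have h1 : ρ z0 (g ⁻¹' A) * μ Aᶜ = 0 := by
        have := rect (g ⁻¹' A) Aᶜ (hgm hA) hA.compl
        rw [this]
        rw [Set.preimage_compl, Set.inter_compl_self]
        simp
      rw [← hA'] at h1
      rcases mul_eq_zero.1 h1 with h | h
      · exact Or.inl h
      · exact Or.inr ((prob_compl_eq_zero_iff hA).1 h)
    obtain ⟨c, hc⟩ := zeroOne_dirac μ key
    exact hnd c hc
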